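/- Let A be a set partition of [n] (n ≥ 1) with r blocks that is NOT atomic, i.e., A = B|C for some nonempty set partitions B of [m] and C of [n−m] with 0 < m < n. Then p(A) := ∑_{γ ∈ Γ'(r)} (−1)^{ℓ(γ)−1} γ[A] = 0 in NCSym. -/

import Mathlib

open Finset

/-- `[n] = {1, …, n}` as a finset of naturals. -/
def seg (n : ℕ) : Finset ℕ := Finset.Icc 1 n

/-- A (raw) collection of blocks. -/
abbrev Blocks := Finset (Finset ℕ)

/-- The ground set (union of the blocks). -/
def ground (A : Blocks) : Finset ℕ := A.sup id

/-- `A` is a set partition of the finite set `X`: nonempty pairwise disjoint blocks with union `X`. -/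
def IsPartitionOf (A : Blocks) (X : Finset ℕ) : Prop :=
  (∀ B ∈ A, B.Nonempty) ∧ (A : Set (Finset ℕ)).PairwiseDisjoint id ∧ ground A = X

/-- `A` is a set partition of `[n]`. -/
def IsSP (A : Blocks) (n : ℕ) : Prop := IsPartitionOf A (seg n)

/-- The unique increasing bijection from `X` onto `[#X]`. -/
def stdFun (X : Finset ℕ) (x : ℕ) : ℕ := (X.filter (· < x)).card + 1

/-- Standardization of a collection of blocks. -/
def stdP (A : Blocks) : Blocks := A.image fun B => B.image (stdFun (ground A))

/-- Shift all entries of all blocks up by `k`. -/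
def shiftP (A : Blocks) (k : ℕ) : Blocks := A.image fun B => B.image (· + k)

/-- Concatenation `A | B` of set partitions: shift `B` up by the weight of `A`. -/
def concatP (A B : Blocks) : Blocks := A ∪ shiftP B (ground A).card

/-- The `i`-th block of `A` (1-based), where blocks are ordered by increasing minima. -/
def blockAt (A : Blocks) (i : ℕ) : Finset ℕ :=
  (A.filter fun B => (A.filter fun C => C.min ≤ B.min).card = i).sup id

/-- `A_J` : the subcollection of blocks of `A` indexed by `J`. -/
def subColl (A : Blocks) (J : Finset ℕ) : Blocks := J.image (blockAt A)

/-- `A` is an atomic set partition of `[n]`. -/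
def IsAtomicSP (A : Blocks) (n : ℕ) : Prop :=
  IsSP A n ∧ 1 ≤ n ∧
    ¬ ∃ m B C, 0 < m ∧ m < n ∧ IsSP B m ∧ IsSP C (n - m) ∧ A = concatP B C

/-- Raw set compositions: words whose letters are finsets of naturals. -/
abbrev SComp := List (Finset ℕ)

/-- The union of the letters of a word. -/
def sunion (γ : SComp) : Finset ℕ := γ.foldr (· ∪ ·) ∅

/-- `γ` is a set composition of `K`. -/
def IsSCompOf (γ : SComp) (K : Finset ℕ) : Prop :=
  (∀ B ∈ γ, B.Nonempty) ∧ γ.Pairwise Disjoint ∧ sunion γ = K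

/-- `γ[A] = std(A_{γ₁}) | std(A_{γ₂}) | ⋯ | std(A_{γₛ})`. -/
def applyComp (γ : SComp) (A : Blocks) : Blocks :=
  (γ.map fun g => stdP (subColl A g)).foldr concatP ∅

abbrev NCSym := Blocks →₀ ℚ

/-- The basis element of `NCSym` indexed by a set partition. -/
noncomputable def bas (A : Blocks) : NCSym := Finsupp.single A 1

/-- `p(A) = ∑_{γ ∈ Γ'(r)} (-1)^{ℓ(γ)-1} γ[A]`. -/
noncomputable def pNC (A : Blocks) (r : ℕ) : NCSym :=
  ∑ᶠ γ ∈ {γ : SComp | IsSCompOf γ (seg r) ∧ 1 ∈ γ.headI},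
    ((-1 : ℚ) ^ (γ.length - 1)) • bas (applyComp γ A)

open TensorProduct in
/-- `Δ(A) = ∑_{K ⊔ L = [r]} std(A_K) ⊗ std(A_L)` on a basis element. -/
noncomputable def deltaB (A : Blocks) : NCSym ⊗[ℚ] NCSym :=
  ∑ K ∈ (seg A.card).powerset,
    bas (stdP (subColl A K)) ⊗ₜ[ℚ] bas (stdP (subColl A (seg A.card \ K)))

/-- The coproduct of `NCSym`, extended linearly. -/
noncomputable def Delta : NCSym →ₗ[ℚ] TensorProduct ℚ NCSym NCSym :=
  Finsupp.lsum ℚ fun A => LinearMap.toSpanSingleton ℚ _ (deltaB A)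


/-! ### Auxiliary lemmas -/

section Aux

lemma seg_card (n : ℕ) : (seg n).card = n := by simp [seg]

lemma mem_seg {x n : ℕ} : x ∈ seg n ↔ 1 ≤ x ∧ x ≤ n := by simp [seg]

lemma ground_empty : ground (∅ : Blocks) = ∅ := rfl

lemma subset_ground {A : Blocks} {b : Finset ℕ} (hb : b ∈ A) : b ⊆ ground A :=
  Finset.le_sup (f := id) hb

lemma ground_union (A B : Blocks) : ground (A ∪ B) = ground A ∪ ground B :=
  Finset.sup_union

/-- image distributes over ground. -/
lemma ground_image (f : ℕ → ℕ) (A : Blocks) :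
    ground (A.image fun b => b.image f) = (ground A).image f := by
  classical
  induction A using Finset.induction_on with
  | empty => simp [ground]
  | insert _ _ h ih =>
    rw [Finset.image_insert]
    unfold ground at *
    rw [Finset.sup_insert, Finset.sup_insert]
    simp only [id, Finset.sup_eq_union, Finset.image_union, ih]

lemma ground_shiftP (A : Blocks) (k : ℕ) :
    ground (shiftP A k) = (ground A).image (· + k) := ground_image _ A

lemma ground_stdP_eq (A : Blocks) :
    ground (stdP A) = (ground A).image (stdFun (ground A)) := ground_image _ A

lemma stdFun_lt_stdFun {X : Finset ℕ} {x y : ℕ} (hx : x ∈ X) (hxy : x < y) :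
    stdFun X x < stdFun X y := by
  classical
  unfold stdFun
  have hsub : X.filter (· < x) ⊆ X.filter (· < y) := by
    intro a ha
    simp only [Finset.mem_filter] at *
    exact ⟨ha.1, lt_trans ha.2 hxy⟩
  have hss : X.filter (· < x) ⊂ X.filter (· < y) :=
    (Finset.ssubset_iff_of_subset hsub).mpr ⟨x, by simp [hx, hxy], by simp⟩
  have := Finset.card_lt_card hss
  omega

lemma image_stdFun_self (X : Finset ℕ) : X.image (stdFun X) = seg X.card := by
  classical
  have hsub : X.image (stdFun X) ⊆ seg X.card := by
    intro v hv
    simp only [Finset.mem_image] at hv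
    obtain ⟨x, hx, rfl⟩ := hv
    have h1 : X.filter (· < x) ⊂ X := by
      refine Finset.ssubset_iff_of_subset (Finset.filter_subset _ _) |>.mpr ?_
      exact ⟨x, hx, by simp⟩
    have := Finset.card_lt_card h1
    rw [mem_seg]; unfold stdFun; omega
  have hinj : Set.InjOn (stdFun X) X := by
    intro a ha b hb hab
    by_contra hne
    rcases lt_or_gt_of_ne hne with h | h
    · exact absurd hab (ne_of_lt (stdFun_lt_stdFun ha h))
    · exact absurd hab.symm (ne_of_lt (stdFun_lt_stdFun hb h))
  have hcard : (X.image (stdFun X)).card = X.card := Finset.card_image_of_injOn hinj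
  exact Finset.eq_of_subset_of_card_le hsub (by rw [hcard, seg_card])

lemma ground_stdP (A : Blocks) : ground (stdP A) = seg (ground A).card := by
  rw [ground_stdP_eq, image_stdFun_self]

lemma image_seg_add (a b : ℕ) : (seg b).image (· + a) = Finset.Icc (a+1) (a+b) := by
  ext x
  simp only [Finset.mem_image, mem_seg, Finset.mem_Icc]
  constructor
  · rintro ⟨y, hy, rfl⟩; omega
  · intro hx; exact ⟨x - a, by omega, by omega⟩

lemma concatP_eq {A : Blocks} {a : ℕ} (h : ground A = seg a) (B : Blocks) :
    concatP A B = A ∪ shiftP B a := by rw [concatP, h, seg_card]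

lemma ground_concatP_seg {A B : Blocks} {a b : ℕ} (hA : ground A = seg a)
    (hB : ground B = seg b) : ground (concatP A B) = seg (a + b) := by
  rw [concatP_eq hA, ground_union, ground_shiftP, hA, hB, image_seg_add]
  ext x
  simp only [Finset.mem_union, mem_seg, Finset.mem_Icc]
  omega

lemma shiftP_shiftP (A : Blocks) (a b : ℕ) :
    shiftP (shiftP A b) a = shiftP A (b + a) := by
  unfold shiftP
  rw [Finset.image_image]
  apply Finset.image_congr
  intro x _
  simp only [Function.comp_apply, Finset.image_image]
  apply Finset.image_congr
  intro y _
  simp [add_assoc]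

lemma shiftP_union (A B : Blocks) (k : ℕ) :
    shiftP (A ∪ B) k = shiftP A k ∪ shiftP B k := Finset.image_union _ _

lemma shiftP_zero (A : Blocks) : shiftP A 0 = A := by
  unfold shiftP
  have : ∀ b : Finset ℕ, b.image (· + 0) = b := fun b => by simp
  simp [this]

lemma concatP_empty (A : Blocks) : concatP A ∅ = A := by
  simp [concatP, shiftP]

lemma empty_concatP (A : Blocks) : concatP ∅ A = A := by
  simp [concatP, ground_empty, shiftP_zero]

lemma concatP_assoc {P Q : Blocks} (X : Blocks) {a b : ℕ}
    (hP : ground P = seg a) (hQ : ground Q = seg b) :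
    concatP (concatP P Q) X = concatP P (concatP Q X) := by
  have h1 : ground (concatP P Q) = seg (a + b) := ground_concatP_seg hP hQ
  rw [concatP_eq h1, concatP_eq hP, concatP_eq hQ, concatP_eq hP, shiftP_union,
    shiftP_shiftP, Finset.union_assoc, Nat.add_comm b a]

end Aux

section Split

/-- If every element of `ground P` is below every element of `ground Q`, standardization
of the union splits as a concatenation. -/
lemma stdP_union_of_lt {P Q : Blocks}
    (hlt : ∀ x ∈ ground P, ∀ y ∈ ground Q, x < y) :
    stdP (P ∪ Q) = concatP (stdP P) (stdP Q) := by
  classical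
  set Xp := ground P with hXp
  set Xq := ground Q with hXq
  have hX : ground (P ∪ Q) = Xp ∪ Xq := ground_union P Q
  -- value of stdFun on the two sides
  have hp : ∀ x ∈ Xp, stdFun (Xp ∪ Xq) x = stdFun Xp x := by
    intro x hx
    unfold stdFun
    congr 1
    rw [Finset.filter_union]
    have : Xq.filter (· < x) = ∅ := by
      rw [Finset.filter_eq_empty_iff]
      intro y hy
      simp only [not_lt]
      exact le_of_lt (hlt x hx y hy)
    rw [this, Finset.union_empty]
  have hdisj : Disjoint Xp Xq := by
    rw [Finset.disjoint_left]
    intro a ha ha'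
    exact lt_irrefl a (hlt a ha a ha')
  have hq : ∀ y ∈ Xq, stdFun (Xp ∪ Xq) y = stdFun Xq y + Xp.card := by
    intro y hy
    unfold stdFun
    rw [Finset.filter_union]
    have h1 : Xp.filter (· < y) = Xp := by
      rw [Finset.filter_eq_self]
      intro x hx
      exact hlt x hx y hy
    rw [h1, Finset.card_union_of_disjoint (hdisj.mono_right (Finset.filter_subset _ _))]
    omega
  -- split the image
  rw [stdP, Finset.image_union, hX]
  have hPside : P.image (fun b => b.image (stdFun (Xp ∪ Xq))) = stdP P := by
    rw [stdP, ← hXp]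
    apply Finset.image_congr
    intro b hb
    apply Finset.image_congr
    intro x hxb
    exact hp x (subset_ground hb hxb)
  have hQside : Q.image (fun b => b.image (stdFun (Xp ∪ Xq)))
      = shiftP (stdP Q) Xp.card := by
    rw [stdP, ← hXq, shiftP, Finset.image_image]
    apply Finset.image_congr
    intro b hb
    simp only [Function.comp_apply, Finset.image_image]
    apply Finset.image_congr
    intro x hxb
    simp only [Function.comp_apply]
    exact hq x (subset_ground hb hxb)
  rw [hPside, hQside, concatP, ground_stdP, seg_card, ← hXp]

end Split

section Rank

/-- The rank of a block: number of blocks with min at most its min. -/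
def rankP (P : Blocks) (b : Finset ℕ) : ℕ := (P.filter fun c => c.min ≤ b.min).card

lemma blockAt_def (P : Blocks) (i : ℕ) :
    blockAt P i = (P.filter fun b => rankP P b = i).sup id := rfl

variable {P : Blocks} (hne : ∀ b ∈ P, b.Nonempty)
  (hdisj : (P : Set (Finset ℕ)).PairwiseDisjoint id)

include hne hdisj in
lemma min_injOn_blocks {b b' : Finset ℕ} (hb : b ∈ P) (hb' : b' ∈ P)
    (h : b.min = b'.min) : b = b' := by
  by_contra hcon
  obtain ⟨v, hv⟩ := Finset.min_of_nonempty (hne b hb)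
  have hv' : v ∈ b := Finset.mem_of_min hv
  have hv'' : v ∈ b' := Finset.mem_of_min (h ▸ hv)
  have := hdisj hb hb' hcon
  exact Finset.disjoint_left.mp this hv' hv''

lemma rankP_lt {b b' : Finset ℕ} (hb' : b' ∈ P) (h : b.min < b'.min) :
    rankP P b < rankP P b' := by
  classical
  apply Finset.card_lt_card
  rw [Finset.ssubset_iff_of_subset]
  · exact ⟨b', Finset.mem_filter.mpr ⟨hb', le_refl _⟩,
      fun hmem => absurd ((Finset.mem_filter.mp hmem).2) (not_le_of_gt h)⟩
  · intro c hc
    rw [Finset.mem_filter] at *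
    exact ⟨hc.1, le_trans hc.2 (le_of_lt h)⟩

include hne hdisj in
lemma rankP_injOn {b b' : Finset ℕ} (hb : b ∈ P) (hb' : b' ∈ P)
    (h : rankP P b = rankP P b') : b = b' := by
  by_contra hcon
  have hmin : b.min ≠ b'.min := fun hm => hcon (min_injOn_blocks hne hdisj hb hb' hm)
  rcases lt_or_gt_of_ne hmin with hlt | hlt
  · exact absurd h (ne_of_lt (rankP_lt hb' hlt))
  · exact absurd h.symm (ne_of_lt (rankP_lt hb hlt))

lemma rankP_pos {b : Finset ℕ} (hb : b ∈ P) : 1 ≤ rankP P b := by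
  classical
  have : b ∈ P.filter fun c => c.min ≤ b.min := Finset.mem_filter.mpr ⟨hb, le_refl _⟩
  exact Finset.card_pos.mpr ⟨b, this⟩

lemma rankP_le {b : Finset ℕ} : rankP P b ≤ P.card :=
  Finset.card_le_card (Finset.filter_subset _ _)

include hne hdisj in
lemma filter_rankP_eq {b : Finset ℕ} (hb : b ∈ P) :
    (P.filter fun c => rankP P c = rankP P b) = {b} := by
  classical
  ext c
  simp only [Finset.mem_filter, Finset.mem_singleton]
  constructor
  · rintro ⟨hc, hrc⟩
    exact rankP_injOn hne hdisj hc hb hrc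
  · rintro rfl
    exact ⟨hb, rfl⟩

include hne hdisj in
lemma blockAt_rankP {b : Finset ℕ} (hb : b ∈ P) : blockAt P (rankP P b) = b := by
  rw [blockAt_def, filter_rankP_eq hne hdisj hb, Finset.sup_singleton, id]

include hne hdisj in
lemma rankP_surj {i : ℕ} (hi : 1 ≤ i) (hi' : i ≤ P.card) :
    ∃ b ∈ P, rankP P b = i := by
  classical
  have hsub : P.image (rankP P) ⊆ seg P.card := by
    intro v hv
    simp only [Finset.mem_image] at hv
    obtain ⟨b, hb, rfl⟩ := hv
    exact mem_seg.mpr ⟨rankP_pos hb, rankP_le⟩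
  have hcard : (P.image (rankP P)).card = P.card :=
    Finset.card_image_of_injOn fun a ha b hb h => rankP_injOn hne hdisj ha hb h
  have heq : P.image (rankP P) = seg P.card :=
    Finset.eq_of_subset_of_card_le hsub (by rw [hcard, seg_card])
  have : i ∈ P.image (rankP P) := heq ▸ mem_seg.mpr ⟨hi, hi'⟩
  simpa using this

include hne hdisj in
lemma blockAt_mem {i : ℕ} (hi : 1 ≤ i) (hi' : i ≤ P.card) : blockAt P i ∈ P := by
  obtain ⟨b, hb, rfl⟩ := rankP_surj hne hdisj hi hi'
  rw [blockAt_rankP hne hdisj hb]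
  exact hb

end Rank

section Concat

variable {B C : Blocks} {m q : ℕ}

lemma block_subset_seg (hB : IsSP B m) {b : Finset ℕ} (hb : b ∈ B) : b ⊆ seg m :=
  hB.2.2 ▸ subset_ground hb

lemma shift_min' {c : Finset ℕ} (hc : c.Nonempty) (m : ℕ) :
    (c.image (· + m)).min' (hc.image _) = c.min' hc + m := by
  exact Finset.min'_image (f := (· + m)) (fun a b h => by dsimp only; omega) c _

lemma min_lt_min_shift (hB : IsSP B m) (hC : IsSP C q)
    {b c : Finset ℕ} (hb : b ∈ B) (hc : c ∈ C) :
    b.min < (c.image (· + m)).min := by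
  have hbne : b.Nonempty := hB.1 b hb
  have hcne : c.Nonempty := hC.1 c hc
  rw [← Finset.coe_min' hbne, ← Finset.coe_min' (hcne.image _)]
  rw [shift_min' hcne m]
  have h1 : b.min' hbne ∈ seg m := block_subset_seg hB hb (Finset.min'_mem _ _)
  have h2 : c.min' hcne ∈ seg q := (hC.2.2 ▸ subset_ground hc) (Finset.min'_mem _ _)
  rw [mem_seg] at h1 h2
  norm_cast
  omega

lemma min_shift_le_iff {c c' : Finset ℕ} (hc : c.Nonempty) (hc' : c'.Nonempty) (m : ℕ) :
    (c'.image (· + m)).min ≤ (c.image (· + m)).min ↔ c'.min ≤ c.min := by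
  rw [← Finset.coe_min' (hc.image _), ← Finset.coe_min' (hc'.image _),
    ← Finset.coe_min' hc, ← Finset.coe_min' hc', shift_min' hc m, shift_min' hc' m,
    ]
  norm_cast
  omega

lemma mem_shiftP_iff {s : Finset ℕ} {k : ℕ} {A : Blocks} :
    s ∈ shiftP A k ↔ ∃ c ∈ A, s = c.image (· + k) := by
  simp [shiftP, eq_comm]

lemma shiftP_card (A : Blocks) (k : ℕ) : (shiftP A k).card = A.card :=
  Finset.card_image_of_injective _ (Finset.image_injective (add_left_injective k))

lemma disjoint_B_shiftC (hB : IsSP B m) (hC : IsSP C q) (hm0 : 0 < m) :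
    Disjoint B (shiftP C m) := by
  rw [Finset.disjoint_left]
  intro b hb hbs
  obtain ⟨c, hc, rfl⟩ := mem_shiftP_iff.mp hbs
  obtain ⟨x, hx⟩ := hC.1 c hc
  have hmem : x + m ∈ c.image (· + m) := Finset.mem_image_of_mem _ hx
  have := block_subset_seg hB hb hmem
  rw [mem_seg] at this
  have hx2 : x ∈ seg q := (hC.2.2 ▸ subset_ground hc) hx
  rw [mem_seg] at hx2
  omega

lemma concatP_card (hB : IsSP B m) (hC : IsSP C q) (hm0 : 0 < m) :
    (concatP B C).card = B.card + C.card := by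
  rw [concatP_eq hB.2.2, Finset.card_union_of_disjoint (disjoint_B_shiftC hB hC hm0),
    shiftP_card]

lemma rankP_concat_low (hB : IsSP B m) (hC : IsSP C q)
    {b : Finset ℕ} (hb : b ∈ B) : rankP (concatP B C) b = rankP B b := by
  classical
  rw [concatP_eq hB.2.2]
  unfold rankP
  rw [Finset.filter_union]
  have h2 : (shiftP C m).filter (fun c => c.min ≤ b.min) = ∅ := by
    rw [Finset.filter_eq_empty_iff]
    intro s hs
    obtain ⟨c, hc, rfl⟩ := mem_shiftP_iff.mp hs
    exact not_le_of_gt (min_lt_min_shift hB hC hb hc)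
  rw [h2, Finset.union_empty]

lemma rankP_concat_high (hB : IsSP B m) (hC : IsSP C q) (hm0 : 0 < m)
    {c : Finset ℕ} (hc : c ∈ C) :
    rankP (concatP B C) (c.image (· + m)) = B.card + rankP C c := by
  classical
  rw [concatP_eq hB.2.2]
  unfold rankP
  rw [Finset.filter_union]
  have h1 : B.filter (fun b => b.min ≤ (c.image (· + m)).min) = B := by
    rw [Finset.filter_eq_self]
    intro b hb
    exact le_of_lt (min_lt_min_shift hB hC hb hc)
  have h2 : (shiftP C m).filter (fun s => s.min ≤ (c.image (· + m)).min)
      = shiftP (C.filter fun c' => c'.min ≤ c.min) m := by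
    rw [shiftP, Finset.filter_image]
    congr 1
    apply Finset.filter_congr
    intro c' hc'
    exact min_shift_le_iff (hC.1 c hc) (hC.1 c' hc') m
  rw [h1, h2, Finset.card_union_of_disjoint, shiftP_card]
  exact (disjoint_B_shiftC hB hC hm0).mono_right
    (Finset.image_subset_image (Finset.filter_subset _ _))

lemma blockAt_concat_low (hB : IsSP B m) (hC : IsSP C q) (hm0 : 0 < m)
    {i : ℕ} (hi' : i ≤ B.card) :
    blockAt (concatP B C) i = blockAt B i := by
  classical
  rw [blockAt_def, blockAt_def]
  have hsp : ∀ (p : Finset ℕ → Prop) (hp : DecidablePred p),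
      (concatP B C).filter p = B.filter p ∪ (shiftP C m).filter p := fun p hp => by
    rw [concatP_eq hB.2.2, Finset.filter_union]
  rw [hsp _ _]
  have h1 : B.filter (fun b => rankP (concatP B C) b = i)
      = B.filter (fun b => rankP B b = i) := by
    apply Finset.filter_congr
    intro b hb
    simp only [rankP_concat_low hB hC hb]
  have h2 : (shiftP C m).filter (fun b => rankP (concatP B C) b = i) = ∅ := by
    rw [Finset.filter_eq_empty_iff]
    intro s hs
    obtain ⟨c, hc, rfl⟩ := mem_shiftP_iff.mp hs
    rw [rankP_concat_high hB hC hm0 hc]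
    have := rankP_pos (P := C) hc
    omega
  rw [h1, h2, Finset.union_empty]

lemma blockAt_concat_high (hB : IsSP B m) (hC : IsSP C q) (hm0 : 0 < m)
    {i : ℕ} (hi : B.card + 1 ≤ i) :
    blockAt (concatP B C) i = (blockAt C (i - B.card)).image (· + m) := by
  classical
  rw [blockAt_def, blockAt_def]
  have hsp : ∀ (p : Finset ℕ → Prop) (hp : DecidablePred p),
      (concatP B C).filter p = B.filter p ∪ (shiftP C m).filter p := fun p hp => by
    rw [concatP_eq hB.2.2, Finset.filter_union]
  rw [hsp _ _]
  have h1 : B.filter (fun b => rankP (concatP B C) b = i) = ∅ := by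
    rw [Finset.filter_eq_empty_iff]
    intro b hb
    rw [rankP_concat_low hB hC hb]
    have : rankP B b ≤ B.card := rankP_le
    omega
  have h2 : (shiftP C m).filter (fun b => rankP (concatP B C) b = i)
      = shiftP (C.filter fun c => rankP C c = i - B.card) m := by
    rw [shiftP, Finset.filter_image]
    congr 1
    apply Finset.filter_congr
    intro c hc
    rw [rankP_concat_high hB hC hm0 hc]
    omega
  rw [h1, h2, Finset.empty_union]
  exact ground_image (· + m) _

end Concat

section FSplit

variable {B C : Blocks} {m q : ℕ}

lemma mem_ground_subColl {A : Blocks} {h : Finset ℕ} {x : ℕ} :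
    x ∈ ground (subColl A h) ↔ ∃ i ∈ h, x ∈ blockAt A i := by
  unfold ground subColl
  rw [Finset.sup_image]
  simp [Finset.mem_sup]

lemma F_split (hB : IsSP B m) (hC : IsSP C q) (hm0 : 0 < m)
    {g : Finset ℕ} (hg : g ⊆ seg (B.card + C.card)) :
    stdP (subColl (concatP B C) g)
      = concatP (stdP (subColl (concatP B C) (g ∩ seg B.card)))
          (stdP (subColl (concatP B C) (g \ seg B.card))) := by
  classical
  set A := concatP B C with hA
  set k := B.card with hk
  have hgsplit : subColl A g = subColl A (g ∩ seg k) ∪ subColl A (g \ seg k) := by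
    unfold subColl
    rw [← Finset.image_union]
    congr 1
    ext a
    simp only [Finset.mem_union, Finset.mem_inter, Finset.mem_sdiff]
    tauto
  rw [hgsplit]
  apply stdP_union_of_lt
  intro x hx y hy
  rw [mem_ground_subColl] at hx hy
  obtain ⟨i, hi, hxi⟩ := hx
  obtain ⟨j, hj, hyj⟩ := hy
  rw [Finset.mem_inter] at hi
  rw [Finset.mem_sdiff] at hj
  have hi1 : 1 ≤ i ∧ i ≤ k := by
    have := mem_seg.mp (hg hi.1)
    have := mem_seg.mp hi.2
    omega
  have hj1 : k + 1 ≤ j ∧ j ≤ k + C.card := by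
    have h1 := mem_seg.mp (hg hj.1)
    have h2 : ¬ (1 ≤ j ∧ j ≤ k) := fun h => hj.2 (mem_seg.mpr h)
    omega
  -- x side
  rw [hA, blockAt_concat_low hB hC hm0 hi1.2] at hxi
  have hxm : x ∈ seg m :=
    block_subset_seg hB (blockAt_mem hB.1 hB.2.1 hi1.1 hi1.2) hxi
  -- y side
  rw [hA, blockAt_concat_high hB hC hm0 hj1.1] at hyj
  obtain ⟨z, hz, rfl⟩ := Finset.mem_image.mp hyj
  have hzq : z ∈ seg q := (hC.2.2 ▸ subset_ground
      (blockAt_mem hC.1 hC.2.1 (by omega) (by omega : j - k ≤ C.card))) hz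
  rw [mem_seg] at hxm hzq
  omega

end FSplit

section Invo

/-- The sign-reversing involution on set compositions: split the first "mixed" letter,
or merge the first `S`-letter followed by a letter disjoint from `S`. -/
def invo (S : Finset ℕ) : SComp → SComp
  | [] => []
  | [a] => if (a ∩ S).Nonempty ∧ (a \ S).Nonempty then [a ∩ S, a \ S] else [a]
  | a :: b :: rest =>
    if (a ∩ S).Nonempty ∧ (a \ S).Nonempty then (a ∩ S) :: (a \ S) :: b :: rest
    else if b ∩ S = ∅ then (a ∪ b) :: rest
    else a :: invo S (b :: rest)

lemma sunion_nil : sunion [] = ∅ := rfl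

lemma inter_union_sdiff' (s t : Finset ℕ) : s ∩ t ∪ s \ t = s := by
  rw [Finset.union_comm, Finset.sdiff_union_inter]

lemma sunion_cons (a : Finset ℕ) (l : SComp) : sunion (a :: l) = a ∪ sunion l := rfl

lemma subset_sunion {γ : SComp} {a : Finset ℕ} (ha : a ∈ γ) : a ⊆ sunion γ := by
  induction γ with
  | nil => simp at ha
  | cons b l ih =>
    rw [sunion_cons]
    rcases List.mem_cons.mp ha with rfl | h
    · exact Finset.subset_union_left
    · exact (ih h).trans Finset.subset_union_right

lemma disjoint_sunion {a : Finset ℕ} {γ : SComp}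
    (h : ∀ b ∈ γ, Disjoint a b) : Disjoint a (sunion γ) := by
  induction γ with
  | nil => simp [sunion_nil]
  | cons b l ih =>
    rw [sunion_cons, Finset.disjoint_union_right]
    exact ⟨h b (by simp), ih fun c hc => h c (by simp [hc])⟩

lemma length_le_card_sunion {γ : SComp} (hne : ∀ a ∈ γ, a.Nonempty)
    (hdisj : γ.Pairwise Disjoint) : γ.length ≤ (sunion γ).card := by
  induction γ with
  | nil => simp
  | cons a l ih =>
    rw [sunion_cons, List.length_cons]
    rw [List.pairwise_cons] at hdisj
    have hd : Disjoint a (sunion l) := disjoint_sunion hdisj.1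
    rw [Finset.card_union_of_disjoint hd]
    have h1 : 1 ≤ a.card := Finset.card_pos.mpr (hne a (by simp))
    have h2 := ih (fun b hb => hne b (by simp [hb])) hdisj.2
    omega

lemma invo_ne_nil (S : Finset ℕ) {γ : SComp} (h : γ ≠ []) : invo S γ ≠ [] := by
  match γ with
  | [a] =>
    rw [invo]
    split <;> simp
  | a :: b :: rest =>
    rw [invo]
    split
    · simp
    · split <;> simp

lemma invo_main (S : Finset ℕ) : ∀ γ : SComp, (∀ a ∈ γ, a.Nonempty) →
    γ.Pairwise Disjoint → (γ.headI ∩ S).Nonempty → (∃ a ∈ γ, (a \ S).Nonempty) →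
    (∀ a ∈ invo S γ, a.Nonempty) ∧ (invo S γ).Pairwise Disjoint ∧
    sunion (invo S γ) = sunion γ ∧ γ.headI ∩ S ⊆ (invo S γ).headI ∧
    ((invo S γ).length = γ.length + 1 ∨ γ.length = (invo S γ).length + 1) ∧
    invo S (invo S γ) = γ := by
  intro γ
  induction γ with
  | nil => intro _ _ _ hex; simp at hex
  | cons a l ih =>
    intro hne hdisj hhead hex
    match l with
    | [] =>
      -- single letter: it must be mixed
      have hmix : (a ∩ S).Nonempty ∧ (a \ S).Nonempty := by
        refine ⟨by simpa using hhead, ?_⟩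
        obtain ⟨c, hc, hcne⟩ := hex
        simp only [List.mem_singleton] at hc
        subst hc
        exact hcne
      rw [invo, if_pos hmix]
      have hds : Disjoint (a ∩ S) (a \ S) :=
        (Finset.disjoint_sdiff (s := S) (t := a)).mono_left Finset.inter_subset_right
      refine ⟨?_, ?_, ?_, ?_, ?_, ?_⟩
      · intro x hx
        rcases List.mem_cons.mp hx with rfl | hx
        · exact hmix.1
        · rcases List.mem_singleton.mp hx with rfl
          exact hmix.2
      · simp [List.pairwise_cons, hds]
      · simp only [sunion_cons, sunion_nil, Finset.union_empty]
        exact inter_union_sdiff' a S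
      · simp
      · simp
      · rw [invo]
        have h1 : ¬ (((a ∩ S) ∩ S).Nonempty ∧ ((a ∩ S) \ S).Nonempty) := by
          rintro ⟨-, h2⟩
          rw [Finset.sdiff_eq_empty_iff_subset.mpr Finset.inter_subset_right] at h2
          exact Finset.not_nonempty_empty h2
        rw [if_neg h1, if_pos (by rw [Finset.sdiff_inter_self])]
        rw [inter_union_sdiff']
    | b :: rest =>
      by_cases hmix : (a ∩ S).Nonempty ∧ (a \ S).Nonempty
      · -- split the head
        rw [invo, if_pos hmix]
        rw [List.pairwise_cons] at hdisj
        have hds : Disjoint (a ∩ S) (a \ S) :=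
          (Finset.disjoint_sdiff (s := S) (t := a)).mono_left Finset.inter_subset_right
        refine ⟨?_, ?_, ?_, ?_, ?_, ?_⟩
        · intro x hx
          rcases List.mem_cons.mp hx with rfl | hx
          · exact hmix.1
          rcases List.mem_cons.mp hx with rfl | hx
          · exact hmix.2
          · exact hne x (by simp [hx])
        · rw [List.pairwise_cons, List.pairwise_cons]
          refine ⟨?_, ?_, hdisj.2⟩
          · intro c hc
            rcases List.mem_cons.mp hc with rfl | hc
            · exact hds
            · exact (hdisj.1 c hc).mono_left Finset.inter_subset_left
          · intro c hc
            exact (hdisj.1 c hc).mono_left (Finset.sdiff_subset)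
        · simp only [sunion_cons, ← Finset.union_assoc, inter_union_sdiff']
        · simp
        · simp
        · rw [invo]
          have h1 : ¬ (((a ∩ S) ∩ S).Nonempty ∧ ((a ∩ S) \ S).Nonempty) := by
            rintro ⟨-, h2⟩
            rw [Finset.sdiff_eq_empty_iff_subset.mpr Finset.inter_subset_right] at h2
            exact Finset.not_nonempty_empty h2
          rw [if_neg h1, if_pos (by rw [Finset.sdiff_inter_self])]
          rw [inter_union_sdiff']
      · by_cases hbS : b ∩ S = ∅
        · -- merge a and b
          rw [invo, if_neg hmix, if_pos hbS]
          have haS : a \ S = ∅ := by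
            by_contra h
            exact hmix ⟨by simpa using hhead, Finset.nonempty_iff_ne_empty.mpr h⟩
          have haSub : a ⊆ S := Finset.sdiff_eq_empty_iff_subset.mp haS
          rw [List.pairwise_cons, List.pairwise_cons] at hdisj
          refine ⟨?_, ?_, ?_, ?_, ?_, ?_⟩
          · intro x hx
            rcases List.mem_cons.mp hx with rfl | hx
            · exact (hne a (by simp)).mono Finset.subset_union_left
            · exact hne x (by simp [hx])
          · rw [List.pairwise_cons]
            refine ⟨?_, hdisj.2.2⟩
            intro c hc
            rw [Finset.disjoint_union_left]
            exact ⟨hdisj.1 c (by simp [hc]), hdisj.2.1 c hc⟩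
          · simp only [sunion_cons, Finset.union_assoc]
          · simp only [List.headI]
            exact Finset.inter_subset_left.trans Finset.subset_union_left
          · simp
          · -- invo of the merged word
            have hab1 : (a ∪ b) ∩ S = a := by
              rw [Finset.union_inter_distrib_right, hbS,
                Finset.inter_eq_left.mpr haSub, Finset.union_empty]
            have hab2 : (a ∪ b) \ S = b := by
              rw [Finset.union_sdiff_distrib, haS, Finset.empty_union,
                Finset.sdiff_eq_self_iff_disjoint.mpr
                  (Finset.disjoint_iff_inter_eq_empty.mpr hbS)]
            have hmix2 : ((a ∪ b) ∩ S).Nonempty ∧ ((a ∪ b) \ S).Nonempty := by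
              rw [hab1, hab2]
              exact ⟨hne a (by simp), hne b (by simp)⟩
            match rest with
            | [] => rw [invo, if_pos hmix2, hab1, hab2]
            | c :: rest' => rw [invo, if_pos hmix2, hab1, hab2]
        · -- recurse on the tail
          rw [invo, if_neg hmix, if_neg hbS]
          have haS : a \ S = ∅ := by
            by_contra h
            exact hmix ⟨by simpa using hhead, Finset.nonempty_iff_ne_empty.mpr h⟩
          rw [List.pairwise_cons] at hdisj
          have hex' : ∃ c ∈ b :: rest, (c \ S).Nonempty := by
            obtain ⟨c, hc, hcne⟩ := hex
            rcases List.mem_cons.mp hc with rfl | hc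
            · rw [haS] at hcne
              exact absurd hcne Finset.not_nonempty_empty
            · exact ⟨c, hc, hcne⟩
          obtain ⟨Hne, Hdisj, Hsun, Hhead, Hlen, Hinv⟩ :=
            ih (fun c hc => hne c (by simp [hc])) hdisj.2
              (by simpa using Finset.nonempty_iff_ne_empty.mpr hbS) hex'
          have hadis : Disjoint a (sunion (b :: rest)) := disjoint_sunion hdisj.1
          refine ⟨?_, ?_, ?_, ?_, ?_, ?_⟩
          · intro x hx
            rcases List.mem_cons.mp hx with rfl | hx
            · exact hne _ (by simp)
            · exact Hne x hx
          · rw [List.pairwise_cons]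
            refine ⟨?_, Hdisj⟩
            intro c hc
            exact hadis.mono_right ((subset_sunion hc).trans (le_of_eq Hsun))
          · rw [sunion_cons, sunion_cons, Hsun]
          · simp only [List.headI]
            exact Finset.inter_subset_left
          · simp only [List.length_cons] at Hlen ⊢
            omega
          · -- involutivity
            have hnn : invo S (b :: rest) ≠ [] := invo_ne_nil S (by simp)
            obtain ⟨c', l', heq⟩ := List.exists_cons_of_ne_nil hnn
            have hc'S : ¬ c' ∩ S = ∅ := by
              have h1 : b ∩ S ⊆ c' := by
                have := Hhead
                rw [heq] at this
                simpa using this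
              have h2 : b ∩ S ⊆ c' ∩ S :=
                Finset.subset_inter h1 Finset.inter_subset_right
              intro hcon
              have := Finset.nonempty_iff_ne_empty.mpr hbS |>.mono h2
              rw [hcon] at this
              exact Finset.not_nonempty_empty this
            rw [heq, invo, if_neg (fun hcon => by
                rw [haS] at hcon
                exact Finset.not_nonempty_empty hcon.2),
              if_neg hc'S, ← heq, Hinv]

end Invo

section ApplyComp

variable {B C : Blocks} {m q : ℕ}

lemma applyComp_nil (A : Blocks) : applyComp [] A = ∅ := rfl

lemma applyComp_cons (a : Finset ℕ) (l : SComp) (A : Blocks) :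
    applyComp (a :: l) A = concatP (stdP (subColl A a)) (applyComp l A) := rfl

lemma applyComp_invo (hB : IsSP B m) (hC : IsSP C q) (hm0 : 0 < m) :
    ∀ γ : SComp, (∀ a ∈ γ, a ⊆ seg (B.card + C.card)) →
    (γ.headI ∩ seg B.card).Nonempty →
    applyComp (invo (seg B.card) γ) (concatP B C) = applyComp γ (concatP B C) := by
  intro γ
  induction γ with
  | nil => intro _ _; rfl
  | cons a l ih =>
    intro hsub hhead
    simp only [List.headI] at hhead
    match l with
    | [] =>
      by_cases hmix : (a ∩ seg B.card).Nonempty ∧ (a \ seg B.card).Nonempty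
      · rw [invo, if_pos hmix, applyComp_cons, applyComp_cons, applyComp_cons,
          applyComp_nil, concatP_empty, concatP_empty]
        exact (F_split hB hC hm0 (hsub a (by simp))).symm
      · rw [invo, if_neg hmix]
    | b :: rest =>
      by_cases hmix : (a ∩ seg B.card).Nonempty ∧ (a \ seg B.card).Nonempty
      · rw [invo, if_pos hmix, applyComp_cons, applyComp_cons, applyComp_cons,
          applyComp_cons, F_split hB hC hm0 (hsub a (by simp)),
          concatP_assoc _ (ground_stdP _) (ground_stdP _), applyComp_cons]
      · by_cases hbS : b ∩ seg B.card = ∅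
        · rw [invo, if_neg hmix, if_pos hbS]
          have haS : a \ seg B.card = ∅ := by
            by_contra h
            exact hmix ⟨hhead, Finset.nonempty_iff_ne_empty.mpr h⟩
          have haSub : a ⊆ seg B.card := Finset.sdiff_eq_empty_iff_subset.mp haS
          have hab1 : (a ∪ b) ∩ seg B.card = a := by
            rw [Finset.union_inter_distrib_right, hbS,
              Finset.inter_eq_left.mpr haSub, Finset.union_empty]
          have hab2 : (a ∪ b) \ seg B.card = b := by
            rw [Finset.union_sdiff_distrib, haS, Finset.empty_union,
              Finset.sdiff_eq_self_iff_disjoint.mpr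
                (Finset.disjoint_iff_inter_eq_empty.mpr hbS)]
          rw [applyComp_cons, applyComp_cons, applyComp_cons,
            F_split hB hC hm0 (Finset.union_subset (hsub a (by simp)) (hsub b (by simp))),
            hab1, hab2, concatP_assoc _ (ground_stdP _) (ground_stdP _)]
        · rw [invo, if_neg hmix, if_neg hbS, applyComp_cons, applyComp_cons]
          congr 1
          exact ih (fun c hc => hsub c (by simp [hc]))
            (by simpa using Finset.nonempty_iff_ne_empty.mpr hbS)

end ApplyComp

section Final

lemma mem_sunion {x : ℕ} {γ : SComp} : x ∈ sunion γ ↔ ∃ a ∈ γ, x ∈ a := by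
  induction γ with
  | nil => simp [sunion_nil]
  | cons b l ih => simp [sunion_cons, ih]

lemma sset_finite (r : ℕ) :
    {γ : SComp | IsSCompOf γ (seg r) ∧ 1 ∈ γ.headI}.Finite := by
  classical
  have h1 : {l : List {x : Finset ℕ // x ∈ (seg r).powerset} | l.length ≤ r}.Finite :=
    List.finite_length_le _ r
  apply Set.Finite.subset (h1.image (fun l => l.map Subtype.val))
  rintro γ ⟨⟨hne, hdisj, hsun⟩, _⟩
  have hsub : ∀ a ∈ γ, a ∈ (seg r).powerset := fun a ha =>
    Finset.mem_powerset.mpr (hsun ▸ subset_sunion ha)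
  refine ⟨γ.pmap (fun a ha => ⟨a, ha⟩) hsub, ?_, ?_⟩
  · show List.length _ ≤ r
    rw [List.length_pmap]
    calc γ.length ≤ (sunion γ).card := length_le_card_sunion hne hdisj
    _ = r := by rw [hsun, seg_card]
  · show List.map Subtype.val _ = γ
    rw [List.map_pmap]
    simp

/-- If a set partition `A` of `[n]` (`n ≥ 1`) with `r` blocks is not atomic,
i.e. `A = B|C` with `B ⊢ [m]`, `C ⊢ [n-m]` and `0 < m < n`, then `p(A) = 0` in `NCSym`. -/
theorem ncsym_pA_eq_zero_of_not_atomic (n r m : ℕ) (hn : 1 ≤ n) (A B C : Blocks)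
    (hA : IsSP A n) (hr : A.card = r)
    (hm0 : 0 < m) (hmn : m < n) (hB : IsSP B m) (hC : IsSP C (n - m))
    (hsplit : A = concatP B C) :
    pNC A r = 0 := by
  classical
  subst hsplit
  have hBne : 1 ≤ B.card := by
    rcases Finset.eq_empty_or_nonempty B with h | h
    · exfalso
      have hg := hB.2.2
      rw [h] at hg
      have h1 : (1:ℕ) ∈ seg m := mem_seg.mpr ⟨le_refl 1, hm0⟩
      rw [← hg] at h1
      simp [ground] at h1
    · exact Finset.card_pos.mpr h
  have hCne : 1 ≤ C.card := by
    rcases Finset.eq_empty_or_nonempty C with h | h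
    · exfalso
      have hg := hC.2.2
      rw [h] at hg
      have h1 : (1:ℕ) ∈ seg (n - m) := mem_seg.mpr ⟨le_refl 1, by omega⟩
      rw [← hg] at h1
      simp [ground] at h1
    · exact Finset.card_pos.mpr h
  have hrk : r = B.card + C.card := by rw [← hr, concatP_card hB hC hm0]
  set S : Finset ℕ := seg B.card with hS
  have h1S : (1:ℕ) ∈ S := mem_seg.mpr ⟨le_refl 1, hBne⟩
  rw [pNC]
  have hfin := sset_finite r
  rw [← Set.Finite.coe_toFinset hfin, finsum_mem_coe_finset]
  -- facts about members
  have hfacts : ∀ γ : SComp, IsSCompOf γ (seg r) ∧ 1 ∈ γ.headI →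
      (∀ a ∈ γ, a.Nonempty) ∧ γ.Pairwise Disjoint ∧ (γ.headI ∩ S).Nonempty ∧
      (∃ a ∈ γ, (a \ S).Nonempty) ∧ (∀ a ∈ γ, a ⊆ seg (B.card + C.card)) ∧ γ ≠ [] := by
    rintro γ ⟨⟨hne, hdisj, hsun⟩, hhead⟩
    have hnn : γ ≠ [] := by
      intro h
      rw [h, sunion_nil] at hsun
      have : (1:ℕ) ∈ seg r := mem_seg.mpr ⟨le_refl 1, by omega⟩
      rw [← hsun] at this
      simp at this
    have hexr : ∃ a ∈ γ, (a \ S).Nonempty := by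
      have hr1 : r ∈ sunion γ := by
        rw [hsun]
        exact mem_seg.mpr ⟨by omega, le_refl r⟩
      obtain ⟨a, ha, har⟩ := mem_sunion.mp hr1
      refine ⟨a, ha, ⟨r, Finset.mem_sdiff.mpr ⟨har, ?_⟩⟩⟩
      rw [hS, mem_seg]
      omega
    refine ⟨hne, hdisj, ⟨1, Finset.mem_inter.mpr ⟨hhead, h1S⟩⟩, hexr, ?_, hnn⟩
    intro a ha
    rw [← hrk, ← hsun]
    exact subset_sunion ha
  apply Finset.sum_involution (fun γ _ => invo S γ)
  · -- sums cancel
    intro γ hγ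
    have hmem := (Set.Finite.mem_toFinset hfin).mp hγ
    obtain ⟨hne, hdisj, hheadS, hex, hsub, hnn⟩ := hfacts γ hmem
    obtain ⟨Ine, Idisj, Isun, Ihead, Ilen, Iinv⟩ := invo_main S γ hne hdisj hheadS hex
    have happ : applyComp (invo S γ) (concatP B C) = applyComp γ (concatP B C) :=
      applyComp_invo hB hC hm0 γ hsub hheadS
    rw [happ]
    have hl1 : 1 ≤ γ.length := List.length_pos_iff.mpr hnn
    have hl2 : 1 ≤ (invo S γ).length := List.length_pos_iff.mpr (invo_ne_nil S hnn)
    have hcoef : (-1:ℚ)^(γ.length - 1) + (-1:ℚ)^((invo S γ).length - 1) = 0 := by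
      rcases Ilen with h | h
      · have e : (invo S γ).length - 1 = (γ.length - 1) + 1 := by omega
        rw [e, pow_succ]
        ring
      · have e : γ.length - 1 = ((invo S γ).length - 1) + 1 := by omega
        rw [e, pow_succ]
        ring
    rw [bas, Finsupp.smul_single, Finsupp.smul_single, smul_eq_mul, smul_eq_mul,
      mul_one, mul_one, ← Finsupp.single_add, hcoef, Finsupp.single_zero]
  · -- not a fixed point
    intro γ hγ _
    have hmem := (Set.Finite.mem_toFinset hfin).mp hγ
    obtain ⟨hne, hdisj, hheadS, hex, hsub, hnn⟩ := hfacts γ hmem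
    obtain ⟨Ine, Idisj, Isun, Ihead, Ilen, Iinv⟩ := invo_main S γ hne hdisj hheadS hex
    intro hcon
    rw [hcon] at Ilen
    omega
  · -- maps into the set
    intro γ hγ
    have hmem := (Set.Finite.mem_toFinset hfin).mp hγ
    obtain ⟨hne, hdisj, hheadS, hex, hsub, hnn⟩ := hfacts γ hmem
    obtain ⟨Ine, Idisj, Isun, Ihead, Ilen, Iinv⟩ := invo_main S γ hne hdisj hheadS hex
    rw [Set.Finite.mem_toFinset hfin]
    refine ⟨⟨Ine, Idisj, by rw [Isun, hmem.1.2.2]⟩, ?_⟩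
    exact Ihead (Finset.mem_inter.mpr ⟨hmem.2, h1S⟩)
  · -- involution
    intro γ hγ
    have hmem := (Set.Finite.mem_toFinset hfin).mp hγ
    obtain ⟨hne, hdisj, hheadS, hex, hsub, hnn⟩ := hfacts γ hmem
    obtain ⟨Ine, Idisj, Isun, Ihead, Ilen, Iinv⟩ := invo_main S γ hne hdisj hheadS hex
    exact Iinv

end Final
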